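/- For all positive integers n and k with k ≤ n, Σ_{j=k}^{n} j(j-1)·s(n,j)·S(j,k) = (2·n!/(k-1)!)·Σ_{i=1}^{n-k+1} C(n-i,k-1)·( H_i·(1+ik)/(i(i+1)) - 1/i² ), where H_i = 1 + 1/2 + … + 1/i. -/

import Mathlib

/-- Unsigned Stirling numbers of the first kind. -/
def stirling1 : ℕ → ℕ → ℕ
  | 0, 0 => 1
  | 0, _ + 1 => 0
  | _ + 1, 0 => 0
  | n + 1, k + 1 => stirling1 n k + n * stirling1 n (k + 1)

/-- Stirling numbers of the second kind. -/
def stirling2 : ℕ → ℕ → ℕ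
  | 0, 0 => 1
  | 0, _ + 1 => 0
  | _ + 1, 0 => 0
  | n + 1, k + 1 => stirling2 n k + (k + 1) * stirling2 n (k + 1)

open scoped BigOperators
/-- The `i`-th harmonic number `H_i = 1 + 1/2 + ⋯ + 1/i`. -/
def harmonicNumber (i : ℕ) : ℚ := ∑ l ∈ Finset.Icc 1 i, (1 : ℚ) / l

open Finset

lemma stirling1_eq_zero : ∀ n j : ℕ, n < j → stirling1 n j = 0 := by
  intro n
  induction n with
  | zero => intro j hj; match j, hj with
    | j+1, _ => rfl
  | succ n ih =>
    intro j hj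
    match j, hj with
    | j+1, hj =>
      show stirling1 n j + n * stirling1 n (j+1) = 0
      rw [ih j (by omega), ih (j+1) (by omega)]; simp

lemma stirling2_eq_zero : ∀ j k : ℕ, j < k → stirling2 j k = 0 := by
  intro j
  induction j with
  | zero => intro k hk; match k, hk with
    | k+1, _ => rfl
  | succ j ih =>
    intro k hk
    match k, hk with
    | k+1, hk =>
      show stirling2 j k + (k+1) * stirling2 j (k+1) = 0
      rw [ih k (by omega), ih (k+1) (by omega)]; simp

def A0Q (n k : ℕ) : ℚ := ∑ j ∈ range (n+1), (stirling1 n j : ℚ) * (stirling2 j k : ℚ)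
def A1Q (n k : ℕ) : ℚ := ∑ j ∈ range (n+1), (j:ℚ) * (stirling1 n j : ℚ) * (stirling2 j k : ℚ)
def A2Q (n k : ℕ) : ℚ :=
  ∑ j ∈ range (n+1), (j:ℚ) * ((j:ℚ)-1) * (stirling1 n j : ℚ) * (stirling2 j k : ℚ)

def f2Q (i k : ℕ) : ℚ :=
  harmonicNumber i * (1 + (i : ℚ) * (k : ℚ)) / ((i : ℚ) * ((i : ℚ) + 1)) - 1 / (i : ℚ) ^ 2

lemma sum_shift (n k : ℕ) (F : ℕ → ℚ) (h0 : F 0 * (stirling2 0 k : ℚ) = 0) :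
    ∑ j ∈ range (n+1), F (j+1) * (stirling1 n (j+1) : ℚ) * (stirling2 (j+1) k : ℚ)
      = ∑ j ∈ range (n+1), F j * (stirling1 n j : ℚ) * (stirling2 j k : ℚ) := by
  have h1 := Finset.sum_range_succ' (fun j => F j * (stirling1 n j : ℚ) * (stirling2 j k : ℚ)) (n+1)
  have h2 := Finset.sum_range_succ (fun j => F j * (stirling1 n j : ℚ) * (stirling2 j k : ℚ)) (n+1)
  have htop : (stirling1 n (n+1) : ℚ) = 0 := by rw [stirling1_eq_zero n (n+1) (by omega)]; rfl
  have hzero : F 0 * (stirling1 n 0 : ℚ) * (stirling2 0 k : ℚ) = 0 := by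
    have : F 0 * (stirling1 n 0 : ℚ) * (stirling2 0 k : ℚ)
        = (stirling1 n 0 : ℚ) * (F 0 * (stirling2 0 k : ℚ)) := by ring
    rw [this, h0, mul_zero]
  rw [htop] at h2
  simp only [mul_zero, zero_mul, add_zero] at h2
  rw [hzero] at h1
  rw [add_zero] at h1
  linarith [h1, h2]

lemma A2Q_rec (n c : ℕ) :
    A2Q (n+1) (c+1) = A2Q n c + 2*A1Q n c
      + ((c:ℚ)+1)*(A2Q n (c+1) + 2*A1Q n (c+1)) + (n:ℚ)*A2Q n (c+1) := by
  have step1 : A2Q (n+1) (c+1) = ∑ j ∈ range (n+1),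
      ( ((j:ℚ)+1)*(j:ℚ)*(stirling1 n j:ℚ)*((stirling2 j c:ℚ)+((c:ℚ)+1)*(stirling2 j (c+1):ℚ))
        + (n:ℚ)*(((j:ℚ)+1)*(((j:ℚ)+1)-1)*(stirling1 n (j+1):ℚ)*(stirling2 (j+1) (c+1):ℚ)) ) := by
    rw [show A2Q (n+1) (c+1) = ∑ j ∈ range (n+1+1),
        (j:ℚ) * ((j:ℚ)-1) * (stirling1 (n+1) j : ℚ) * (stirling2 j (c+1) : ℚ) from rfl,
      Finset.sum_range_succ']
    simp only [Nat.cast_zero, zero_mul, mul_zero, zero_sub, add_zero, zero_add]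
    apply Finset.sum_congr rfl
    intro j _
    have e1 : stirling1 (n+1) (j+1) = stirling1 n j + n * stirling1 n (j+1) := rfl
    have e2 : stirling2 (j+1) (c+1) = stirling2 j c + (c+1) * stirling2 j (c+1) := rfl
    rw [e1, e2]
    push_cast
    ring
  rw [step1, Finset.sum_add_distrib, ← Finset.mul_sum]
  have step3 : ∑ j ∈ range (n+1),
      ((j:ℚ)+1)*(((j:ℚ)+1)-1)*(stirling1 n (j+1):ℚ)*(stirling2 (j+1) (c+1):ℚ)
      = A2Q n (c+1) := by
    have := sum_shift n (c+1) (fun j => (j:ℚ)*((j:ℚ)-1)) (by norm_num)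
    simp only [Nat.cast_add, Nat.cast_one] at this
    rw [this]
    rfl
  rw [step3]
  have step4 : ∑ j ∈ range (n+1),
      ((j:ℚ)+1)*(j:ℚ)*(stirling1 n j:ℚ)*((stirling2 j c:ℚ)+((c:ℚ)+1)*(stirling2 j (c+1):ℚ))
      = A2Q n c + 2*A1Q n c + ((c:ℚ)+1)*(A2Q n (c+1) + 2*A1Q n (c+1)) := by
    simp only [A2Q, A1Q, mul_add, Finset.mul_sum, ← Finset.sum_add_distrib]
    apply Finset.sum_congr rfl
    intro j _
    ring
  rw [step4]

lemma A1Q_rec (n c : ℕ) :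
    A1Q (n+1) (c+1) = A1Q n c + A0Q n c
      + ((c:ℚ)+1)*(A1Q n (c+1) + A0Q n (c+1)) + (n:ℚ)*A1Q n (c+1) := by
  have step1 : A1Q (n+1) (c+1) = ∑ j ∈ range (n+1),
      ( ((j:ℚ)+1)*(stirling1 n j:ℚ)*((stirling2 j c:ℚ)+((c:ℚ)+1)*(stirling2 j (c+1):ℚ))
        + (n:ℚ)*(((j:ℚ)+1)*(stirling1 n (j+1):ℚ)*(stirling2 (j+1) (c+1):ℚ)) ) := by
    rw [show A1Q (n+1) (c+1) = ∑ j ∈ range (n+1+1),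
        (j:ℚ) * (stirling1 (n+1) j : ℚ) * (stirling2 j (c+1) : ℚ) from rfl,
      Finset.sum_range_succ']
    simp only [Nat.cast_zero, zero_mul, mul_zero, add_zero, zero_add]
    apply Finset.sum_congr rfl
    intro j _
    have e1 : stirling1 (n+1) (j+1) = stirling1 n j + n * stirling1 n (j+1) := rfl
    have e2 : stirling2 (j+1) (c+1) = stirling2 j c + (c+1) * stirling2 j (c+1) := rfl
    rw [e1, e2]
    push_cast
    ring
  rw [step1, Finset.sum_add_distrib, ← Finset.mul_sum]
  have step3 : ∑ j ∈ range (n+1),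
      ((j:ℚ)+1)*(stirling1 n (j+1):ℚ)*(stirling2 (j+1) (c+1):ℚ)
      = A1Q n (c+1) := by
    have := sum_shift n (c+1) (fun j => (j:ℚ)) (by norm_num [stirling2])
    simp only [Nat.cast_add, Nat.cast_one] at this
    rw [this]
    rfl
  rw [step3]
  have step4 : ∑ j ∈ range (n+1),
      ((j:ℚ)+1)*(stirling1 n j:ℚ)*((stirling2 j c:ℚ)+((c:ℚ)+1)*(stirling2 j (c+1):ℚ))
      = A1Q n c + A0Q n c + ((c:ℚ)+1)*(A1Q n (c+1) + A0Q n (c+1)) := by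
    simp only [A1Q, A0Q, mul_add, Finset.mul_sum, ← Finset.sum_add_distrib]
    apply Finset.sum_congr rfl
    intro j _
    ring
  rw [step4]

lemma A0Q_rec (n c : ℕ) :
    A0Q (n+1) (c+1) = A0Q n c + ((c:ℚ)+1)*(A0Q n (c+1)) + (n:ℚ)*A0Q n (c+1) := by
  have step1 : A0Q (n+1) (c+1) = ∑ j ∈ range (n+1),
      ( (stirling1 n j:ℚ)*((stirling2 j c:ℚ)+((c:ℚ)+1)*(stirling2 j (c+1):ℚ))
        + (n:ℚ)*((1:ℚ)*(stirling1 n (j+1):ℚ)*(stirling2 (j+1) (c+1):ℚ)) ) := by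
    rw [show A0Q (n+1) (c+1) = ∑ j ∈ range (n+1+1),
        (stirling1 (n+1) j : ℚ) * (stirling2 j (c+1) : ℚ) from rfl,
      Finset.sum_range_succ']
    have hz : (stirling1 (n+1) 0 : ℚ) * (stirling2 0 (c+1) : ℚ) = 0 := by
      norm_num [stirling1, stirling2]
    rw [hz, add_zero]
    apply Finset.sum_congr rfl
    intro j _
    have e1 : stirling1 (n+1) (j+1) = stirling1 n j + n * stirling1 n (j+1) := rfl
    have e2 : stirling2 (j+1) (c+1) = stirling2 j c + (c+1) * stirling2 j (c+1) := rfl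
    rw [e1, e2]
    push_cast
    ring
  rw [step1, Finset.sum_add_distrib, ← Finset.mul_sum]
  have step3 : ∑ j ∈ range (n+1),
      (1:ℚ)*(stirling1 n (j+1):ℚ)*(stirling2 (j+1) (c+1):ℚ)
      = A0Q n (c+1) := by
    have := sum_shift n (c+1) (fun _ => (1:ℚ)) (by norm_num [stirling2])
    rw [this]
    simp only [one_mul]
    rfl
  rw [step3]
  have step4 : ∑ j ∈ range (n+1),
      (stirling1 n j:ℚ)*((stirling2 j c:ℚ)+((c:ℚ)+1)*(stirling2 j (c+1):ℚ))
      = A0Q n c + ((c:ℚ)+1)*(A0Q n (c+1)) := by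
    simp only [A0Q, mul_add, Finset.mul_sum, ← Finset.sum_add_distrib]
    apply Finset.sum_congr rfl
    intro j _
    ring
  rw [step4]


lemma harm_succ (i : ℕ) : harmonicNumber (i+1) = harmonicNumber i + 1/((i:ℚ)+1) := by
  rw [harmonicNumber, harmonicNumber, Finset.sum_Icc_succ_top (by omega)]
  push_cast
  ring

lemma sum_Icc_eq_range {M : Type*} [AddCommMonoid M] (a n : ℕ) (f : ℕ → M) :
    ∑ i ∈ Icc a n, f i = ∑ i ∈ range (n + 1 - a), f (a + i) := by
  rw [← Finset.Ico_add_one_right_eq_Icc, Finset.sum_Ico_eq_sum_range]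

lemma sum_range_choose' (N c : ℕ) : ∑ m ∈ range N, m.choose c = N.choose (c+1) := by
  induction N with
  | zero => simp
  | succ N ih => rw [Finset.sum_range_succ, ih, Nat.choose_succ_succ]; ring

lemma sum_Icc_choose' (n c : ℕ) : ∑ i ∈ Icc 1 n, (n-i).choose c = n.choose (c+1) := by
  rw [sum_Icc_eq_range]
  simp only [Nat.add_sub_cancel]
  rw [← sum_range_choose' n c, ← Finset.sum_range_reflect]
  apply Finset.sum_congr rfl
  intro i hi
  congr 1
  simp only [Finset.mem_range] at hi
  omega

lemma sum_Icc_choose'' (l n c : ℕ) (hl : l ≤ n) :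
    ∑ i ∈ Icc (l+1) n, (n-i).choose c = (n-l).choose (c+1) := by
  rw [← sum_Icc_choose' (n-l) c, sum_Icc_eq_range, sum_Icc_eq_range]
  apply Finset.sum_congr (by congr 1; omega) ?_
  intro i _
  congr 1
  omega

lemma absQ (m c : ℕ) : ((m:ℚ) - c) * m.choose c = ((c:ℚ)+1) * m.choose (c+1) := by
  rcases le_or_gt c m with h | h
  · have hnat := Nat.choose_succ_right_eq m c
    have : ((m.choose (c+1) * (c+1) : ℕ) : ℚ) = ((m.choose c * (m - c) : ℕ) : ℚ) := by rw [hnat]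
    push_cast [h] at this
    linarith
  · rw [Nat.choose_eq_zero_of_lt h, Nat.choose_eq_zero_of_lt (by omega)]
    norm_num

lemma L2 (n c : ℕ) :
    ∑ i ∈ Icc 1 n, ((n-i).choose c : ℚ) * harmonicNumber (i-1)
      = ∑ i ∈ Icc 1 n, ((n-i).choose (c+1) : ℚ) * (1/(i:ℚ)) := by
  have lhs_eq : ∀ i ∈ Icc 1 n, ((n-i).choose c : ℚ) * harmonicNumber (i-1)
      = ∑ l ∈ Icc 1 n, (if l < i then ((n-i).choose c : ℚ) * (1/(l:ℚ)) else 0) := by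
    intro i hi
    rw [Finset.mem_Icc] at hi
    rw [← Finset.sum_filter]
    have hset : (Icc 1 n).filter (fun l => l < i) = Icc 1 (i-1) := by
      ext l
      simp only [Finset.mem_filter, Finset.mem_Icc]
      omega
    rw [hset, harmonicNumber, Finset.mul_sum]
  rw [Finset.sum_congr rfl lhs_eq, Finset.sum_comm]
  apply Finset.sum_congr rfl
  intro l hl
  rw [Finset.mem_Icc] at hl
  rw [← Finset.sum_filter]
  have hset : (Icc 1 n).filter (fun i => l < i) = Icc (l+1) n := by
    ext i
    simp only [Finset.mem_filter, Finset.mem_Icc]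
    omega
  rw [hset, ← Finset.sum_mul, ← Nat.cast_sum]
  rw [sum_Icc_choose'' l n c hl.2]

lemma perI1 (n c i : ℕ) (hi1 : 1 ≤ i) (hin : i ≤ n) :
    ((n:ℚ)+1) * ((((n-i).choose c : ℚ) + ((n-i).choose (c+1):ℚ)) * (1/(i:ℚ)))
      = ((c:ℚ)+1) * (((n-i).choose c:ℚ) * (1/(i:ℚ)))
        + ((c:ℚ)+2+(n:ℚ)) * (((n-i).choose (c+1):ℚ) * (1/(i:ℚ)))
        + ((n-i).choose c : ℚ) := by
  have hsub : ((n - i : ℕ):ℚ) = (n:ℚ) - (i:ℚ) := Nat.cast_sub hin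
  have hc1 : ((c:ℚ)+1) ≠ 0 := by positivity
  have hb : ((n-i).choose (c+1) : ℚ)
      = ((n:ℚ)-(i:ℚ)-(c:ℚ)) * ((n-i).choose c : ℚ) / ((c:ℚ)+1) := by
    rw [eq_div_iff hc1]
    have := absQ (n-i) c
    rw [hsub] at this
    linarith [this]
  have hi0 : ((i:ℚ)) ≠ 0 := by
    simp only [ne_eq, Nat.cast_eq_zero]; omega
  rw [hb]
  field_simp
  ring

lemma perI2 (n c i : ℕ) (hi1 : 1 ≤ i) (hin : i ≤ n) :
    ((n:ℚ)+1) * ((((n-i).choose c : ℚ) + ((n-i).choose (c+1):ℚ)) * f2Q i (c+2))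
      = (((c:ℚ)+1) * (((n-i).choose c:ℚ) * f2Q i (c+1))
        + ((c:ℚ)+1) * (((n-i).choose c:ℚ) * (1/(i:ℚ)))
        + ((c:ℚ)+2+(n:ℚ)) * (((n-i).choose (c+1):ℚ) * f2Q i (c+2))
        + ((c:ℚ)+2) * (((n-i).choose (c+1):ℚ) * (1/(i:ℚ))))
        + ((c:ℚ)+2) * (((n-i).choose c:ℚ) * harmonicNumber (i-1))
        - ((c:ℚ)+2) * (((n-i).choose (c+1):ℚ) * (1/(i:ℚ))) := by
  obtain ⟨m, rfl⟩ : ∃ m, i = m+1 := ⟨i-1, by omega⟩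
  have hH : harmonicNumber (m+1) = harmonicNumber m + 1/((m:ℚ)+1) := harm_succ m
  have hsub : ((n - (m+1) : ℕ):ℚ) = (n:ℚ) - (m:ℚ) - 1 := by
    rw [Nat.cast_sub hin]; push_cast; ring
  have hc1 : ((c:ℚ)+1) ≠ 0 := by positivity
  have hb : ((n-(m+1)).choose (c+1) : ℚ)
      = ((n:ℚ)-(m:ℚ)-1-(c:ℚ)) * ((n-(m+1)).choose c : ℚ) / ((c:ℚ)+1) := by
    rw [eq_div_iff hc1]
    have := absQ (n-(m+1)) c
    rw [hsub] at this
    linarith [this]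
  have hm1 : ((m:ℚ)+1) ≠ 0 := by positivity
  have hm2 : ((m:ℚ)+1+1) ≠ 0 := by positivity
  simp only [f2Q, hH, Nat.add_sub_cancel, hb]
  push_cast
  field_simp
  ring

lemma A0Q_zero (n : ℕ) (hn : 1 ≤ n) : A0Q n 0 = 0 := by
  obtain ⟨m, rfl⟩ : ∃ m, n = m+1 := ⟨n-1, by omega⟩
  apply Finset.sum_eq_zero
  intro j _
  match j with
  | 0 => show (stirling1 (m+1) 0 : ℚ) * _ = 0; norm_num [stirling1]
  | j+1 => show _ * (stirling2 (j+1) 0 : ℚ) = 0; norm_num [stirling2]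

lemma A1Q_zero (n : ℕ) : A1Q n 0 = 0 := by
  apply Finset.sum_eq_zero
  intro j _
  match j with
  | 0 => norm_num
  | j+1 => show _ * (stirling2 (j+1) 0 : ℚ) = 0; norm_num [stirling2]

lemma A2Q_zero (n : ℕ) : A2Q n 0 = 0 := by
  apply Finset.sum_eq_zero
  intro j _
  match j with
  | 0 => norm_num
  | j+1 => show _ * (stirling2 (j+1) 0 : ℚ) = 0; norm_num [stirling2]



set_option maxHeartbeats 1600000 in
lemma master (n : ℕ) (hn : 1 ≤ n) : ∀ c : ℕ,
    (A0Q n (c+1) = (n.factorial : ℚ)/((c+1).factorial : ℚ) * ((n-1).choose c : ℚ))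
  ∧ (A1Q n (c+1) = (n.factorial : ℚ)/(c.factorial : ℚ)
        * ∑ i ∈ Icc 1 n, ((n-i).choose c : ℚ) * (1/(i:ℚ)))
  ∧ (A2Q n (c+1) = 2*(n.factorial : ℚ)/(c.factorial : ℚ)
        * ∑ i ∈ Icc 1 n, ((n-i).choose c : ℚ) * f2Q i (c+1)) := by
  induction n, hn using Nat.le_induction with
  | base =>
    intro c
    have h10 : stirling1 1 0 = 0 := rfl
    have h11 : stirling1 1 1 = 1 := rfl
    have hH1 : harmonicNumber 1 = 1 := by norm_num [harmonicNumber]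
    refine ⟨?_, ?_, ?_⟩
    · show ∑ j ∈ range 2, (stirling1 1 j : ℚ) * (stirling2 j (c+1) : ℚ) = _
      cases c with
      | zero =>
        have : stirling2 1 1 = 1 := rfl
        norm_num [Finset.sum_range_succ, h10, h11, this]
      | succ c =>
        have h2 : stirling2 1 (c+2) = 0 := stirling2_eq_zero 1 (c+2) (by omega)
        have h3 : Nat.choose 0 (c+1) = 0 := Nat.choose_eq_zero_of_lt (by omega)
        norm_num [Finset.sum_range_succ, h10, h11, h2, h3]
    · show ∑ j ∈ range 2, (j:ℚ) * (stirling1 1 j : ℚ) * (stirling2 j (c+1) : ℚ) = _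
      cases c with
      | zero =>
        have : stirling2 1 1 = 1 := rfl
        norm_num [Finset.sum_range_succ, h10, h11, this, Finset.Icc_self]
      | succ c =>
        have h2 : stirling2 1 (c+2) = 0 := stirling2_eq_zero 1 (c+2) (by omega)
        have h3 : Nat.choose 0 (c+1) = 0 := Nat.choose_eq_zero_of_lt (by omega)
        norm_num [Finset.sum_range_succ, h10, h11, h2, h3, Finset.Icc_self]
    · show ∑ j ∈ range 2, (j:ℚ) * ((j:ℚ)-1) * (stirling1 1 j : ℚ) * (stirling2 j (c+1) : ℚ) = _
      cases c with
      | zero =>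
        have : stirling2 1 1 = 1 := rfl
        norm_num [Finset.sum_range_succ, h10, h11, this, Finset.Icc_self, f2Q, hH1]
      | succ c =>
        have h2 : stirling2 1 (c+2) = 0 := stirling2_eq_zero 1 (c+2) (by omega)
        have h3 : Nat.choose 0 (c+1) = 0 := Nat.choose_eq_zero_of_lt (by omega)
        norm_num [Finset.sum_range_succ, h10, h11, h2, h3, Finset.Icc_self]
  | succ n hn ih =>
    intro c
    have hfn : ((n+1).factorial : ℚ) = ((n:ℚ)+1) * (n.factorial : ℚ) := by
      rw [Nat.factorial_succ]; push_cast; ring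
    have hnf0 : (n.factorial : ℚ) ≠ 0 := Nat.cast_ne_zero.mpr (Nat.factorial_ne_zero n)
    have hn1 : ((n:ℚ)+1) ≠ 0 := by positivity
    cases c with
    | zero =>
      obtain ⟨ih0, ih1, ih2⟩ := ih 0
      have hchoose0 : ∀ m : ℕ, (m.choose 0 : ℚ) = 1 := fun m => by
        rw [Nat.choose_zero_right]; norm_num
      refine ⟨?_, ?_, ?_⟩
      · rw [A0Q_rec n 0, A0Q_zero n hn, ih0]
        simp only [Nat.add_sub_cancel, hchoose0, Nat.factorial_one, hfn]
        push_cast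
        ring
      · rw [A1Q_rec n 0, A1Q_zero, A0Q_zero n hn, ih0, ih1]
        rw [Finset.sum_Icc_succ_top (by omega : 1 ≤ n+1)]
        simp only [Nat.add_sub_cancel, hchoose0, Nat.factorial_one, Nat.factorial_zero, hfn]
        push_cast
        field_simp
        ring
      · rw [A2Q_rec n 0, A2Q_zero, A1Q_zero, ih1, ih2]
        rw [Finset.sum_Icc_succ_top (by omega : 1 ≤ n+1)]
        have hsub : ∀ i ∈ Icc 1 n, ((n+1-i).choose 0 : ℚ) * f2Q i 1
            = ((n-i).choose 0 : ℚ) * f2Q i 1 := by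
          intro i _
          rw [Nat.choose_zero_right, Nat.choose_zero_right]
        rw [Finset.sum_congr rfl hsub]
        have hf2top : ((n+1-(n+1)).choose 0 : ℚ) * f2Q (n+1) 1
            = harmonicNumber n / ((n:ℚ)+1) + 1/(((n:ℚ)+1)^2) - 1/(((n:ℚ)+1)^2) := by
          rw [Nat.choose_zero_right, f2Q, harm_succ]
          have h2 : ((n:ℚ)+1) ≠ 0 := by positivity
          have h3 : ((n:ℚ)+1+1) ≠ 0 := by positivity
          push_cast
          field_simp
          ring
        rw [hf2top]
        have hharm : ∑ i ∈ Icc 1 n, ((n-i).choose 0 : ℚ) * (1/(i:ℚ)) = harmonicNumber n := by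
          rw [harmonicNumber]
          apply Finset.sum_congr rfl
          intro i _
          rw [Nat.choose_zero_right]
          norm_num
        rw [hharm, hfn]
        simp only [Nat.factorial_zero]
        push_cast
        field_simp
        ring
    | succ c =>
      obtain ⟨m, rfl⟩ : ∃ m, n = m+1 := ⟨n-1, by omega⟩
      obtain ⟨ih0, ih1, ih2⟩ := ih c
      obtain ⟨ih0', ih1', ih2'⟩ := ih (c+1)
      have hfc : ((c+1).factorial : ℚ) = ((c:ℚ)+1) * (c.factorial : ℚ) := by
        rw [Nat.factorial_succ]; push_cast; ring
      have hfc2 : ((c+2).factorial : ℚ) = ((c:ℚ)+2) * ((c+1).factorial : ℚ) := by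
        rw [show c+2 = (c+1)+1 from rfl, Nat.factorial_succ]; push_cast; ring
      have hcf0 : (c.factorial : ℚ) ≠ 0 := Nat.cast_ne_zero.mpr (Nat.factorial_ne_zero c)
      have hc1 : ((c:ℚ)+1) ≠ 0 := by positivity
      have hc2 : ((c:ℚ)+2) ≠ 0 := by positivity
      have hmsimp : m + 1 + 1 - 1 = m + 1 := by omega
      have hmsimp2 : m + 1 - 1 = m := by omega
      have hpascal : ((m+1).choose (c+1) : ℚ) = (m.choose c : ℚ) + (m.choose (c+1) : ℚ) := by
        rw [Nat.choose_succ_succ]; push_cast; ring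
      have habs : ((m:ℚ) - c) * (m.choose c : ℚ) = ((c:ℚ)+1) * (m.choose (c+1) : ℚ) := absQ m c
      refine ⟨?_, ?_, ?_⟩
      · rw [A0Q_rec (m+1) (c+1), ih0, ih0']
        rw [hmsimp, hmsimp2, hpascal, hfn, hfc2, hfc]
        have hb : (m.choose (c+1) : ℚ) = ((m:ℚ)-(c:ℚ)) * (m.choose c : ℚ) / ((c:ℚ)+1) := by
          rw [eq_div_iff hc1]; linarith [habs]
        rw [hb]
        push_cast
        field_simp
        ring
      · -- A1 case
        rw [A1Q_rec (m+1) (c+1), ih0, ih0', ih1, ih1']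
        have hnew : ∑ i ∈ Icc 1 (m+1+1), ((m+1+1-i).choose (c+1) : ℚ) * (1/(i:ℚ))
            = ∑ i ∈ Icc 1 (m+1), ((((m+1)-i).choose c : ℚ) + (((m+1)-i).choose (c+1) : ℚ)) * (1/(i:ℚ)) := by
          rw [Finset.sum_Icc_succ_top (by omega : 1 ≤ m+1+1)]
          have htop : ((m+1+1-(m+1+1)).choose (c+1) : ℚ) = 0 := by
            simp [Nat.choose_eq_zero_of_lt]
          rw [htop, zero_mul, add_zero]
          apply Finset.sum_congr rfl
          intro i hi
          rw [Finset.mem_Icc] at hi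
          have : m+1+1-i = ((m+1)-i)+1 := by omega
          rw [this, Nat.choose_succ_succ]
          push_cast
          ring
        have key : ((m:ℚ)+1+1) * ∑ i ∈ Icc 1 (m+1), ((((m+1)-i).choose c : ℚ) + (((m+1)-i).choose (c+1) : ℚ)) * (1/(i:ℚ))
            = ((c:ℚ)+1) * (∑ i ∈ Icc 1 (m+1), (((m+1)-i).choose c : ℚ) * (1/(i:ℚ)))
              + ((c:ℚ)+2+((m:ℚ)+1)) * (∑ i ∈ Icc 1 (m+1), (((m+1)-i).choose (c+1) : ℚ) * (1/(i:ℚ)))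
              + ((m+1).choose (c+1) : ℚ) := by
          rw [Finset.mul_sum]
          have hper : ∀ i ∈ Icc 1 (m+1), ((m:ℚ)+1+1) * (((((m+1)-i).choose c : ℚ) + (((m+1)-i).choose (c+1) : ℚ)) * (1/(i:ℚ)))
              = ((c:ℚ)+1) * ((((m+1)-i).choose c : ℚ) * (1/(i:ℚ)))
                + ((c:ℚ)+2+((m:ℚ)+1)) * ((((m+1)-i).choose (c+1) : ℚ) * (1/(i:ℚ)))
                + (((m+1)-i).choose c : ℚ) := by
            intro i hi
            rw [Finset.mem_Icc] at hi
            have := perI1 (m+1) c i hi.1 hi.2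
            push_cast at this ⊢
            linarith [this]
          rw [Finset.sum_congr rfl hper]
          rw [Finset.sum_add_distrib, Finset.sum_add_distrib, ← Finset.mul_sum, ← Finset.mul_sum]
          rw [← Nat.cast_sum, sum_Icc_choose' (m+1) c]
        have hSnew : ∑ i ∈ Icc 1 (m+1), ((((m+1)-i).choose c : ℚ) + (((m+1)-i).choose (c+1) : ℚ)) * (1/(i:ℚ))
            = (((c:ℚ)+1) * (∑ i ∈ Icc 1 (m+1), (((m+1)-i).choose c : ℚ) * (1/(i:ℚ)))
              + ((c:ℚ)+2+((m:ℚ)+1)) * (∑ i ∈ Icc 1 (m+1), (((m+1)-i).choose (c+1) : ℚ) * (1/(i:ℚ)))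
              + ((m+1).choose (c+1) : ℚ)) / ((m:ℚ)+1+1) := by
          rw [eq_div_iff (by positivity)]
          push_cast at key ⊢
          linarith [key]
        rw [hnew, hSnew]
        rw [hfn]
        rw [show ((c+1+1).factorial:ℚ) = ((c:ℚ)+2)*(((c:ℚ)+1)*(c.factorial:ℚ)) from by
          rw [Nat.factorial_succ, Nat.factorial_succ]; push_cast; ring]
        rw [hfc, hmsimp2, hpascal]
        push_cast
        field_simp
        ring
      · -- A2 case
        rw [A2Q_rec (m+1) (c+1), ih1, ih1', ih2, ih2']
        have hnew : ∑ i ∈ Icc 1 (m+1+1), ((m+1+1-i).choose (c+1) : ℚ) * f2Q i (c+2)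
            = ∑ i ∈ Icc 1 (m+1), ((((m+1)-i).choose c : ℚ) + (((m+1)-i).choose (c+1) : ℚ)) * f2Q i (c+2) := by
          rw [Finset.sum_Icc_succ_top (by omega : 1 ≤ m+1+1)]
          have htop : ((m+1+1-(m+1+1)).choose (c+1) : ℚ) = 0 := by
            simp [Nat.choose_eq_zero_of_lt]
          rw [htop, zero_mul, add_zero]
          apply Finset.sum_congr rfl
          intro i hi
          rw [Finset.mem_Icc] at hi
          have : m+1+1-i = ((m+1)-i)+1 := by omega
          rw [this, Nat.choose_succ_succ]
          push_cast
          ring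
        have key : ((m:ℚ)+1+1) * ∑ i ∈ Icc 1 (m+1), ((((m+1)-i).choose c : ℚ) + (((m+1)-i).choose (c+1) : ℚ)) * f2Q i (c+2)
            = ((c:ℚ)+1) * (∑ i ∈ Icc 1 (m+1), (((m+1)-i).choose c : ℚ) * f2Q i (c+1))
              + ((c:ℚ)+1) * (∑ i ∈ Icc 1 (m+1), (((m+1)-i).choose c : ℚ) * (1/(i:ℚ)))
              + ((c:ℚ)+2+((m:ℚ)+1)) * (∑ i ∈ Icc 1 (m+1), (((m+1)-i).choose (c+1) : ℚ) * f2Q i (c+2))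
              + ((c:ℚ)+2) * (∑ i ∈ Icc 1 (m+1), (((m+1)-i).choose (c+1) : ℚ) * (1/(i:ℚ))) := by
          rw [Finset.mul_sum]
          have hper : ∀ i ∈ Icc 1 (m+1), ((m:ℚ)+1+1) * (((((m+1)-i).choose c : ℚ) + (((m+1)-i).choose (c+1) : ℚ)) * f2Q i (c+2))
              = (((c:ℚ)+1) * ((((m+1)-i).choose c : ℚ) * f2Q i (c+1))
                + ((c:ℚ)+1) * ((((m+1)-i).choose c : ℚ) * (1/(i:ℚ)))
                + ((c:ℚ)+2+((m:ℚ)+1)) * ((((m+1)-i).choose (c+1) : ℚ) * f2Q i (c+2))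
                + ((c:ℚ)+2) * ((((m+1)-i).choose (c+1) : ℚ) * (1/(i:ℚ))))
                + ((c:ℚ)+2) * ((((m+1)-i).choose c : ℚ) * harmonicNumber (i-1))
                - ((c:ℚ)+2) * ((((m+1)-i).choose (c+1) : ℚ) * (1/(i:ℚ))) := by
            intro i hi
            rw [Finset.mem_Icc] at hi
            have := perI2 (m+1) c i hi.1 hi.2
            push_cast at this ⊢
            linarith [this]
          rw [Finset.sum_congr rfl hper]
          rw [Finset.sum_sub_distrib, Finset.sum_add_distrib, Finset.sum_add_distrib,
            Finset.sum_add_distrib, Finset.sum_add_distrib]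
          simp only [← Finset.mul_sum]
          rw [L2 (m+1) c]
          ring
        have hSnew : ∑ i ∈ Icc 1 (m+1), ((((m+1)-i).choose c : ℚ) + (((m+1)-i).choose (c+1) : ℚ)) * f2Q i (c+2)
            = (((c:ℚ)+1) * (∑ i ∈ Icc 1 (m+1), (((m+1)-i).choose c : ℚ) * f2Q i (c+1))
              + ((c:ℚ)+1) * (∑ i ∈ Icc 1 (m+1), (((m+1)-i).choose c : ℚ) * (1/(i:ℚ)))
              + ((c:ℚ)+2+((m:ℚ)+1)) * (∑ i ∈ Icc 1 (m+1), (((m+1)-i).choose (c+1) : ℚ) * f2Q i (c+2))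
              + ((c:ℚ)+2) * (∑ i ∈ Icc 1 (m+1), (((m+1)-i).choose (c+1) : ℚ) * (1/(i:ℚ)))) / ((m:ℚ)+1+1) := by
          rw [eq_div_iff (by positivity)]
          push_cast at key ⊢
          linarith [key]
        rw [hnew, hSnew]
        rw [hfn, hfc]
        push_cast
        field_simp
        ring

theorem stmt_7 (n k : ℕ) (hk : 1 ≤ k) (hkn : k ≤ n) :
    (∑ j ∈ Finset.Icc k n, (j : ℚ) * ((j : ℚ) - 1) * (stirling1 n j : ℚ) * (stirling2 j k : ℚ)) =
      2 * (n.factorial : ℚ) / ((k - 1).factorial : ℚ) *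
        ∑ i ∈ Finset.Icc 1 (n - k + 1), ((n - i).choose (k - 1) : ℚ) *
          (harmonicNumber i * (1 + (i : ℚ) * (k : ℚ)) / ((i : ℚ) * ((i : ℚ) + 1))
            - 1 / (i : ℚ) ^ 2) := by
  obtain ⟨c, rfl⟩ : ∃ c, k = c+1 := ⟨k-1, by omega⟩
  have hn1 : 1 ≤ n := le_trans hk hkn
  have h2 := (master n hn1 c).2.2
  have hL : (∑ j ∈ Finset.Icc (c+1) n,
      (j : ℚ) * ((j : ℚ) - 1) * (stirling1 n j : ℚ) * (stirling2 j (c+1) : ℚ)) = A2Q n (c+1) := by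
    apply Finset.sum_subset
    · intro j hj
      rw [Finset.mem_Icc] at hj
      rw [Finset.mem_range]
      omega
    · intro j hj hnot
      rw [Finset.mem_range] at hj
      rw [Finset.mem_Icc] at hnot
      rw [stirling2_eq_zero j (c+1) (by omega)]
      norm_num
  rw [hL, h2]
  simp only [Nat.add_sub_cancel]
  congr 1
  have hsub : ∑ i ∈ Finset.Icc 1 (n - (c+1) + 1), ((n - i).choose c : ℚ) *
        (harmonicNumber i * (1 + (i : ℚ) * ((c:ℚ)+1)) / ((i : ℚ) * ((i : ℚ) + 1))
          - 1 / (i : ℚ) ^ 2)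
      = ∑ i ∈ Finset.Icc 1 n, ((n - i).choose c : ℚ) *
        (harmonicNumber i * (1 + (i : ℚ) * ((c:ℚ)+1)) / ((i : ℚ) * ((i : ℚ) + 1))
          - 1 / (i : ℚ) ^ 2) := by
    apply Finset.sum_subset
    · intro i hi
      rw [Finset.mem_Icc] at hi ⊢
      omega
    · intro i hi hnot
      rw [Finset.mem_Icc] at hi hnot
      rw [Nat.choose_eq_zero_of_lt (by omega : n - i < c)]
      norm_num
  rw [show ((c+1 : ℕ) : ℚ) = (c:ℚ)+1 from by push_cast; ring] at *
  have hcong : ∑ i ∈ Finset.Icc 1 n, ((n - i).choose c : ℚ) * f2Q i (c+1)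
      = ∑ i ∈ Finset.Icc 1 n, ((n - i).choose c : ℚ) *
        (harmonicNumber i * (1 + (i : ℚ) * ((c:ℚ)+1)) / ((i : ℚ) * ((i : ℚ) + 1))
          - 1 / (i : ℚ) ^ 2) := by
    apply Finset.sum_congr rfl
    intro i _
    rw [f2Q]
    push_cast
    ring
  rw [hcong, ← hsub]
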